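/- Let Θ be the transpose map and S the completely depolarizing channel S(e) = (1/ν) tr(e) 1 on B(ℂ^ν). Define T_p = (1−p) S + p Θ for p ∈ [0,1]. Then T_p is completely positive if and only if p ≤ 1/(ν+1). -/

import Mathlib

open scoped Kronecker Matrix.Norms.L2Operator ComplexOrder
open Matrix Classical

namespace QI

/-- Total matrix square root: the positive square root for positive semidefinite
matrices, junk value `0` otherwise. -/
noncomputable def msqrt {n : Type*} [Fintype n] [DecidableEq n] (A : Matrix n n ℂ) :
    Matrix n n ℂ :=
  if h : A.PosSemidef then
    (h.1.eigenvectorUnitary : Matrix n n ℂ) * diagonal ((↑) ∘ Real.sqrt ∘ h.1.eigenvalues) *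
      star (h.1.eigenvectorUnitary : Matrix n n ℂ)
  else 0

/-- Trace norm `‖X‖₁ = tr √(Xᴴ X)`. -/
noncomputable def traceNorm {n : Type*} [Fintype n] [DecidableEq n] (X : Matrix n n ℂ) : ℝ :=
  (msqrt (Xᴴ * X)).trace.re

/-- Fidelity `f(ρ,σ) = tr √(√ρ σ √ρ)`. -/
noncomputable def fid {n : Type*} [Fintype n] [DecidableEq n] (ρ σ : Matrix n n ℂ) : ℝ :=
  (msqrt (msqrt ρ * σ * msqrt ρ)).trace.re

/-- Amplification `id_k ⊗ Φ` of a map between matrix algebras. -/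
noncomputable def amp {nB nA : ℕ} (k : ℕ)
    (Φ : Matrix (Fin nB) (Fin nB) ℂ →ₗ[ℂ] Matrix (Fin nA) (Fin nA) ℂ) :
    Matrix (Fin k × Fin nB) (Fin k × Fin nB) ℂ →ₗ[ℂ]
      Matrix (Fin k × Fin nA) (Fin k × Fin nA) ℂ where
  toFun X := Matrix.of fun p q => Φ (Matrix.of fun a b => X (p.1, a) (q.1, b)) p.2 q.2
  map_add' X Y := by
    ext p q
    have h : (Matrix.of fun a b => (X + Y) (p.1, a) (q.1, b))
        = (Matrix.of fun a b => X (p.1, a) (q.1, b))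
          + Matrix.of fun a b => Y (p.1, a) (q.1, b) := by
      ext a b; simp
    show Φ (Matrix.of fun a b => (X + Y) (p.1, a) (q.1, b)) p.2 q.2
      = Φ (Matrix.of fun a b => X (p.1, a) (q.1, b)) p.2 q.2
        + Φ (Matrix.of fun a b => Y (p.1, a) (q.1, b)) p.2 q.2
    rw [h, map_add]; rfl
  map_smul' c X := by
    ext p q
    have h : (Matrix.of fun a b => (c • X) (p.1, a) (q.1, b))
        = c • Matrix.of fun a b => X (p.1, a) (q.1, b) := by
      ext a b; simp
    show Φ (Matrix.of fun a b => (c • X) (p.1, a) (q.1, b)) p.2 q.2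
      = (c • Φ (Matrix.of fun a b => X (p.1, a) (q.1, b))) p.2 q.2
    rw [h, _root_.map_smul]

/-- Operator norm of a linear map between matrix spaces, each equipped with the
ℓ²-operator norm. -/
noncomputable def opNorm {m n : Type*} [Fintype m] [Fintype n] [DecidableEq m] [DecidableEq n]
    (Φ : Matrix m m ℂ →ₗ[ℂ] Matrix n n ℂ) : ℝ :=
  ‖LinearMap.toContinuousLinearMap Φ‖

/-- The norm of complete boundedness `‖Φ‖_cb = sup_k ‖id_k ⊗ Φ‖`. -/
noncomputable def cbNorm {nB nA : ℕ}
    (Φ : Matrix (Fin nB) (Fin nB) ℂ →ₗ[ℂ] Matrix (Fin nA) (Fin nA) ℂ) : ℝ :=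
  ⨆ k : ℕ, opNorm (amp k Φ)

/-- Complete positivity. -/
def IsCP {nB nA : ℕ}
    (Φ : Matrix (Fin nB) (Fin nB) ℂ →ₗ[ℂ] Matrix (Fin nA) (Fin nA) ℂ) : Prop :=
  ∀ (k : ℕ) (X : Matrix (Fin k × Fin nB) (Fin k × Fin nB) ℂ),
    X.PosSemidef → (amp k Φ X).PosSemidef

/-- The (Heisenberg picture) channel `T(b) = Vᴴ (b ⊗ 1_E) V` defined by a Stinespring
operator `V : H_A → H_B ⊗ H_E`. -/
noncomputable def stine {nA nB nE : ℕ} (V : Matrix (Fin nB × Fin nE) (Fin nA) ℂ) :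
    Matrix (Fin nB) (Fin nB) ℂ →ₗ[ℂ] Matrix (Fin nA) (Fin nA) ℂ where
  toFun b := Vᴴ * (b ⊗ₖ (1 : Matrix (Fin nE) (Fin nE) ℂ)) * V
  map_add' b c := by simp [Matrix.add_kronecker, Matrix.add_mul, Matrix.mul_add]
  map_smul' c b := by simp [Matrix.smul_kronecker, Matrix.smul_mul, Matrix.mul_smul]

/-- The complementary channel `T_E(e) = Vᴴ (1_B ⊗ e) V`. -/
noncomputable def stineC {nA nB nE : ℕ} (V : Matrix (Fin nB × Fin nE) (Fin nA) ℂ) :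
    Matrix (Fin nE) (Fin nE) ℂ →ₗ[ℂ] Matrix (Fin nA) (Fin nA) ℂ where
  toFun e := Vᴴ * ((1 : Matrix (Fin nB) (Fin nB) ℂ) ⊗ₖ e) * V
  map_add' b c := by simp [Matrix.kronecker_add, Matrix.add_mul, Matrix.mul_add]
  map_smul' c b := by simp [Matrix.kronecker_smul, Matrix.smul_mul, Matrix.mul_smul]

/-- The Schrödinger (trace-duality) adjoint `Φ_*`, determined by
`tr (Φ_*(ρ) b) = tr (ρ Φ(b))`. -/
noncomputable def dualMap {nB nA : ℕ}
    (Φ : Matrix (Fin nB) (Fin nB) ℂ →ₗ[ℂ] Matrix (Fin nA) (Fin nA) ℂ) :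
    Matrix (Fin nA) (Fin nA) ℂ →ₗ[ℂ] Matrix (Fin nB) (Fin nB) ℂ where
  toFun ρ := Matrix.of fun i j => (ρ * Φ (Matrix.single j i 1)).trace
  map_add' ρ τ := by ext i j; simp [Matrix.add_mul]
  map_smul' c ρ := by ext i j; simp [Matrix.smul_mul]

/-- Outer product `|ψ⟩⟨ψ|`. -/
def outer {n : Type*} (ψ : n → ℂ) : Matrix n n ℂ :=
  Matrix.vecMulVec ψ (star ψ)

/-- Partial trace over the second tensor factor. -/
noncomputable def ptrace2 {a e : Type*} [Fintype e] (M : Matrix (a × e) (a × e) ℂ) : Matrix a a ℂ :=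
  Matrix.of fun i j => ∑ k, M (i, k) (j, k)

/-- Partial trace over the first tensor factor. -/
noncomputable def ptrace1 {a e : Type*} [Fintype a] (M : Matrix (a × e) (a × e) ℂ) : Matrix e e ℂ :=
  Matrix.of fun i j => ∑ k, M (k, i) (k, j)

/-- The Schrödinger picture channel `T_*(ρ) = tr_E (V ρ Vᴴ)`. -/
noncomputable def schrod {nA nB nE : ℕ} (V : Matrix (Fin nB × Fin nE) (Fin nA) ℂ) :
    Matrix (Fin nA) (Fin nA) ℂ →ₗ[ℂ] Matrix (Fin nB) (Fin nB) ℂ where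
  toFun ρ := ptrace2 (V * ρ * Vᴴ)
  map_add' ρ τ := by
    ext i j
    simp [ptrace2, Matrix.add_mul, Matrix.mul_add, Finset.sum_add_distrib]
  map_smul' c ρ := by
    ext i j
    simp [ptrace2, Matrix.smul_mul, Matrix.mul_smul, Finset.mul_sum]

/-- Completely depolarizing channel `S(e) = tr(σ e) 1_A` (Heisenberg picture). -/
noncomputable def depol {nE nA : ℕ} (σ : Matrix (Fin nE) (Fin nE) ℂ) :
    Matrix (Fin nE) (Fin nE) ℂ →ₗ[ℂ] Matrix (Fin nA) (Fin nA) ℂ where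
  toFun e := (σ * e).trace • 1
  map_add' e f := by simp [Matrix.mul_add, add_smul]
  map_smul' c e := by simp [Matrix.mul_smul, smul_smul]

/-- The transpose map `Θ(e) = eᵀ`. -/
def transposeMap (ν : ℕ) : Matrix (Fin ν) (Fin ν) ℂ →ₗ[ℂ] Matrix (Fin ν) (Fin ν) ℂ where
  toFun e := eᵀ
  map_add' := by intros; simp
  map_smul' := by intros; simp

/-- The maximally depolarizing channel `S(e) = (1/ν) tr(e) 1`. -/
noncomputable def depolS (ν : ℕ) :
    Matrix (Fin ν) (Fin ν) ℂ →ₗ[ℂ] Matrix (Fin ν) (Fin ν) ℂ :=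
  depol ((ν : ℂ)⁻¹ • (1 : Matrix (Fin ν) (Fin ν) ℂ))

/-- `T_p = (1-p) S + p Θ`. -/
noncomputable def Tp (ν : ℕ) (p : ℝ) :
    Matrix (Fin ν) (Fin ν) ℂ →ₗ[ℂ] Matrix (Fin ν) (Fin ν) ℂ :=
  (((1 - p : ℝ) : ℂ)) • depolS ν + ((p : ℝ) : ℂ) • transposeMap ν

/-- The flip (swap) operator `F = Σ_{i,j} |i,j⟩⟨j,i|`. -/
def flipOp (ν : ℕ) : Matrix (Fin ν × Fin ν) (Fin ν × Fin ν) ℂ :=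
  Matrix.of fun p q => if p.1 = q.2 ∧ p.2 = q.1 then 1 else 0

/-- Amplification on the right factor: `Φ ⊗ id_k`. -/
noncomputable def ampL {nB nA : ℕ} (k : ℕ)
    (Φ : Matrix (Fin nB) (Fin nB) ℂ →ₗ[ℂ] Matrix (Fin nA) (Fin nA) ℂ) :
    Matrix (Fin nB × Fin k) (Fin nB × Fin k) ℂ →ₗ[ℂ]
      Matrix (Fin nA × Fin k) (Fin nA × Fin k) ℂ where
  toFun X := Matrix.of fun p q => Φ (Matrix.of fun a b => X (a, p.2) (b, q.2)) p.1 q.1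
  map_add' X Y := by
    ext p q
    have h : (Matrix.of fun a b => (X + Y) (a, p.2) (b, q.2))
        = (Matrix.of fun a b => X (a, p.2) (b, q.2))
          + Matrix.of fun a b => Y (a, p.2) (b, q.2) := by
      ext a b; simp
    show Φ (Matrix.of fun a b => (X + Y) (a, p.2) (b, q.2)) p.1 q.1
      = Φ (Matrix.of fun a b => X (a, p.2) (b, q.2)) p.1 q.1
        + Φ (Matrix.of fun a b => Y (a, p.2) (b, q.2)) p.1 q.1
    rw [h, map_add]; rfl
  map_smul' c X := by
    ext p q
    have h : (Matrix.of fun a b => (c • X) (a, p.2) (b, q.2))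
        = c • Matrix.of fun a b => X (a, p.2) (b, q.2) := by
      ext a b; simp
    show Φ (Matrix.of fun a b => (c • X) (a, p.2) (b, q.2)) p.1 q.1
      = (c • Φ (Matrix.of fun a b => X (a, p.2) (b, q.2))) p.1 q.1
    rw [h, _root_.map_smul]

/-- Operational fidelity of two channels. -/
noncomputable def opFid {nA nB : ℕ}
    (T₁ T₂ : Matrix (Fin nB) (Fin nB) ℂ →ₗ[ℂ] Matrix (Fin nA) (Fin nA) ℂ) : ℝ :=
  ⨅ ψ : {ψ : Fin nA × Fin nA → ℂ // ∑ x, ‖ψ x‖ ^ 2 = 1},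
    fid (amp nA (dualMap T₁) (outer ψ.1)) (amp nA (dualMap T₂) (outer ψ.1))

/-- Minimality of a Stinespring representation. -/
def Minimal {nA nB nE : ℕ} (V : Matrix (Fin nB × Fin nE) (Fin nA) ℂ) : Prop :=
  Submodule.span ℂ {x : Fin nB × Fin nE → ℂ |
    ∃ (b : Matrix (Fin nB) (Fin nB) ℂ) (φ : Fin nA → ℂ),
      x = (b ⊗ₖ (1 : Matrix (Fin nE) (Fin nE) ℂ)).mulVec (V.mulVec φ)} = ⊤




lemma sbm_ct {ν : ℕ} (i c : Fin ν) : (single i c (1:ℂ))ᴴ = single c i 1 := by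
  ext a b
  simp [conjTranspose_apply, single, and_comm]

lemma sbm_mul_mul {ν : ℕ} (e : Matrix (Fin ν) (Fin ν) ℂ) (c i j d a b : Fin ν) :
    (single c i (1:ℂ) * e * single j d (1:ℂ) : Matrix (Fin ν) (Fin ν) ℂ) a b
      = if c = a ∧ d = b then e i j else 0 := by
  rcases eq_or_ne a c with rfl | h
  · rcases eq_or_ne b d with rfl | h2
    · rw [Matrix.mul_assoc]
      simp
    · rw [if_neg (by tauto)]
      exact Matrix.mul_single_apply_of_ne (c := (1:ℂ)) j d a b (by tauto) _
  · rw [if_neg (by tauto), Matrix.mul_assoc]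
    exact Matrix.single_mul_apply_of_ne (c := (1:ℂ)) c i a b (by tauto) _

lemma transposeMap_apply {ν : ℕ} (e : Matrix (Fin ν) (Fin ν) ℂ) : transposeMap ν e = eᵀ := rfl

noncomputable def krausFam (ν : ℕ) (p : ℝ) : Fin 2 × Fin ν × Fin ν → Matrix (Fin ν) (Fin ν) ℂ :=
  fun s =>
    if s.1 = 0 then ((Real.sqrt ((1 - p) / ν - p) : ℝ) : ℂ) • single s.2.1 s.2.2 1
    else ((Real.sqrt (p / 2) : ℝ) : ℂ) •
      (single s.2.1 s.2.2 1 + single s.2.2 s.2.1 1)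

lemma fam0_sum {ν : ℕ} (e : Matrix (Fin ν) (Fin ν) ℂ) (a b : Fin ν) :
    ∑ i : Fin ν, ∑ c : Fin ν,
        (single c i (1:ℂ) * e * single i c (1:ℂ) : Matrix (Fin ν) (Fin ν) ℂ) a b
      = if a = b then e.trace else 0 := by
  simp only [sbm_mul_mul]
  rcases eq_or_ne a b with rfl | hab
  · simp [Matrix.trace, Matrix.diag]
  · rw [if_neg hab]
    refine Finset.sum_eq_zero fun i _ => Finset.sum_eq_zero fun c _ => if_neg ?_
    rintro ⟨rfl, rfl⟩; exact hab rfl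

lemma fam1_sum {ν : ℕ} (e : Matrix (Fin ν) (Fin ν) ℂ) (a b : Fin ν) :
    ∑ i : Fin ν, ∑ c : Fin ν,
        ((single c i (1:ℂ) + single i c 1) * e
          * (single i c (1:ℂ) + single c i 1) : Matrix (Fin ν) (Fin ν) ℂ) a b
      = (if a = b then e.trace else 0) + e b a + (e b a + if a = b then e.trace else 0) := by
  have expand : ∀ i c : Fin ν,
      ((single c i (1:ℂ) + single i c 1) * e
          * (single i c (1:ℂ) + single c i 1) : Matrix (Fin ν) (Fin ν) ℂ) a b
        = (if c = a ∧ c = b then e i i else 0) + (if c = a ∧ i = b then e i c else 0)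
          + ((if i = a ∧ c = b then e c i else 0) + (if i = a ∧ i = b then e c c else 0)) := by
    intro i c
    simp only [Matrix.add_mul, Matrix.mul_add, Matrix.add_apply, sbm_mul_mul]
    ring
  simp only [expand]
  rw [Finset.sum_congr rfl fun i _ => Finset.sum_add_distrib,
      Finset.sum_add_distrib]
  rw [Finset.sum_congr rfl fun i _ =>
        Finset.sum_congr rfl fun c _ => rfl]
  congr 1
  · rw [Finset.sum_congr rfl fun i _ => Finset.sum_add_distrib, Finset.sum_add_distrib]
    congr 1
    · rcases eq_or_ne a b with rfl | hab
      · simp [Matrix.trace, Matrix.diag]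
      · rw [if_neg hab]
        refine Finset.sum_eq_zero fun i _ => Finset.sum_eq_zero fun c _ => if_neg ?_
        rintro ⟨rfl, rfl⟩; exact hab rfl
    · -- ∑ i ∑ c, if c = a ∧ i = b then e i c else 0 = e b a
      rw [Finset.sum_eq_single b, Finset.sum_eq_single a]
      · simp
      · intro c _ hc; exact if_neg (by tauto)
      · intro h; exact absurd (Finset.mem_univ a) h
      · intro i _ hi
        exact Finset.sum_eq_zero fun c _ => if_neg (by tauto)
      · intro h; exact absurd (Finset.mem_univ b) h
  · rw [Finset.sum_congr rfl fun i _ => Finset.sum_add_distrib, Finset.sum_add_distrib]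
    congr 1
    · rw [Finset.sum_eq_single a]
      · rw [Finset.sum_eq_single b]
        · simp
        · intro c _ hc; exact if_neg (by tauto)
        · intro h; exact absurd (Finset.mem_univ b) h
      · intro i _ hi
        exact Finset.sum_eq_zero fun c _ => if_neg (by tauto)
      · intro h; exact absurd (Finset.mem_univ a) h
    · rcases eq_or_ne a b with rfl | hab
      · rw [if_pos rfl, Finset.sum_eq_single a]
        · simp [Matrix.trace, Matrix.diag]
        · intro i _ hi
          exact Finset.sum_eq_zero fun c _ => if_neg (by tauto)
        · intro h; exact absurd (Finset.mem_univ a) h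
      · rw [if_neg hab]
        refine Finset.sum_eq_zero fun i _ => Finset.sum_eq_zero fun c _ => if_neg ?_
        rintro ⟨rfl, rfl⟩; exact hab rfl


lemma kraus_sum {ν : ℕ} {p : ℝ} (hp0 : 0 ≤ p) (hg : 0 ≤ (1 - p) / (ν:ℝ) - p)
    (e : Matrix (Fin ν) (Fin ν) ℂ) :
    Tp ν p e = ∑ s : Fin 2 × Fin ν × Fin ν, (krausFam ν p s)ᴴ * e * krausFam ν p s := by
  have h0 : ((Real.sqrt ((1 - p) / ν - p) : ℝ) : ℂ) * ((Real.sqrt ((1 - p) / ν - p) : ℝ) : ℂ)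
      = ((1 : ℂ) - (p:ℂ)) / (ν:ℂ) - (p:ℂ) := by
    rw [← Complex.ofReal_mul, Real.mul_self_sqrt hg]
    push_cast
    ring
  have h1 : ((Real.sqrt (p/2) : ℝ) : ℂ) * ((Real.sqrt (p/2) : ℝ) : ℂ) = (p:ℂ)/2 := by
    rw [← Complex.ofReal_mul, Real.mul_self_sqrt (by linarith)]
    push_cast
    ring
  ext a b
  rw [Matrix.sum_apply]
  rw [Fintype.sum_prod_type]
  rw [Fin.sum_univ_two]
  simp only [Tp, LinearMap.add_apply, LinearMap.smul_apply, depolS, depol, transposeMap_apply,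
    LinearMap.coe_mk, AddHom.coe_mk, Matrix.add_apply, Matrix.smul_apply, smul_eq_mul,
    Matrix.transpose_apply, Matrix.smul_mul, Matrix.one_mul, Matrix.trace_smul,
    Matrix.one_apply, krausFam, if_true, Matrix.conjTranspose_smul, Matrix.conjTranspose_add,
    sbm_ct, Matrix.mul_smul, Complex.star_def, Complex.conj_ofReal]
  simp only [show ¬(1:Fin 2)=0 by decide, if_false, Matrix.conjTranspose_smul,
    Matrix.conjTranspose_add, sbm_ct, Complex.star_def, Complex.conj_ofReal,
    Matrix.smul_mul, Matrix.mul_smul, Matrix.smul_apply, smul_eq_mul]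
  simp only [← mul_assoc]
  rw [← Finset.mul_sum, ← Finset.mul_sum, h0, h1]
  rw [Fintype.sum_prod_type, Fintype.sum_prod_type, fam0_sum, fam1_sum]
  rcases eq_or_ne a b with rfl | hab
  · simp only [if_true, eq_self_iff_true]
    push_cast
    ring
  · simp only [if_neg hab]
    ring

lemma amp_kraus {k ν : ℕ} (K : Matrix (Fin ν) (Fin ν) ℂ)
    (X : Matrix (Fin k × Fin ν) (Fin k × Fin ν) ℂ) (c d : Fin k) (a b : Fin ν) :
    (Kᴴ * (Matrix.of fun i j => X (c, i) (d, j)) * K : Matrix (Fin ν) (Fin ν) ℂ) a b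
      = (((1 : Matrix (Fin k) (Fin k) ℂ) ⊗ₖ K)ᴴ * X * ((1 : Matrix (Fin k) (Fin k) ℂ) ⊗ₖ K))
          (c, a) (d, b) := by
  simp only [Matrix.mul_apply, Matrix.conjTranspose_apply, Matrix.kroneckerMap_apply,
    Matrix.one_apply, Matrix.of_apply, Fintype.sum_prod_type, apply_ite (star : ℂ → ℂ), star_zero, star_one,
    ite_mul, mul_ite, mul_zero, zero_mul, one_mul, mul_one, Finset.sum_ite_eq,
    Finset.sum_ite_eq', Finset.mem_univ, if_true]
  rw [Finset.sum_comm]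
  simp only [Finset.sum_ite_eq', Finset.mem_univ, if_true, Finset.sum_mul]
  refine Finset.sum_congr rfl fun x _ => ?_
  rw [Finset.sum_comm]
  simp only [ite_mul, zero_mul, Finset.sum_ite_eq', Finset.mem_univ, if_true]

lemma posSemidef_sum {n : Type*} [Fintype n] {ι : Type*} [Fintype ι]
    (f : ι → Matrix n n ℂ) (h : ∀ i, (f i).PosSemidef) :
    (∑ i, f i).PosSemidef := by
  classical
  refine Finset.sum_induction f _ (fun a b ha hb => ha.add hb) ?_ (fun i _ => h i)
  refine ⟨Matrix.isHermitian_zero, fun x => ?_⟩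
  simp

lemma amp_Tp {ν k : ℕ} {p : ℝ} (hp0 : 0 ≤ p) (hg : 0 ≤ (1 - p) / (ν:ℝ) - p)
    (X : Matrix (Fin k × Fin ν) (Fin k × Fin ν) ℂ) :
    amp k (Tp ν p) X = ∑ s : Fin 2 × Fin ν × Fin ν,
      ((1 : Matrix (Fin k) (Fin k) ℂ) ⊗ₖ krausFam ν p s)ᴴ * X
        * ((1 : Matrix (Fin k) (Fin k) ℂ) ⊗ₖ krausFam ν p s) := by
  ext ⟨c, a⟩ ⟨d, b⟩
  show Tp ν p (Matrix.of fun i j => X (c, i) (d, j)) a b = _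
  rw [kraus_sum hp0 hg, Matrix.sum_apply, Matrix.sum_apply]
  exact Finset.sum_congr rfl fun s _ => amp_kraus _ _ _ _ _ _


theorem Tp_isCP_iff {ν : ℕ} (hν : 2 ≤ ν) (p : ℝ) (hp : p ∈ Set.Icc (0 : ℝ) 1) :
    IsCP (Tp ν p) ↔ p ≤ 1 / ((ν : ℝ) + 1) := by
  obtain ⟨hp0, hp1⟩ := hp
  have hν2 : (2:ℝ) ≤ (ν:ℝ) := by exact_mod_cast hν
  have hν0 : (0:ℝ) < (ν:ℝ) := by linarith
  constructor
  · intro hCP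
    set f : Fin 2 → Fin ν := fun c => ⟨c.1, lt_of_lt_of_le c.2 hν⟩ with hf
    have hfinj : ∀ c d : Fin 2, f c = f d ↔ c = d := by
      intro c d
      simp [hf, Fin.ext_iff]
    set w : Fin 2 × Fin ν → ℂ := fun q => if q.2 = f q.1 then 1 else 0 with hw
    set B : Matrix (Fin 1) (Fin 2 × Fin ν) ℂ := Matrix.of fun _ q => w q with hB
    have hX : (Bᴴ * B).PosSemidef := Matrix.posSemidef_conjTranspose_mul_self B
    have hM := hCP 2 (Bᴴ * B) hX
    set M := amp 2 (Tp ν p) (Bᴴ * B) with hMdef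
    have hME : ∀ q1 q2 : Fin 2 × Fin ν, M q1 q2
        = (1 - (p:ℂ)) * ((ν:ℂ))⁻¹ * (if f q1.1 = f q2.1 then 1 else 0)
            * (if q1.2 = q2.2 then 1 else 0)
          + (p:ℂ) * ((if q2.2 = f q1.1 then 1 else 0) * (if q1.2 = f q2.1 then 1 else 0)) := by
      rintro ⟨c, a⟩ ⟨d, b⟩
      show Tp ν p (Matrix.of fun i j => (Bᴴ * B) (c, i) (d, j)) a b = _
      have hXe : ∀ (i j : Fin ν),
          (Bᴴ * B) (c, i) (d, j)
            = (if i = f c then 1 else 0) * (if j = f d then 1 else 0) := by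
        intro i j
        rw [Matrix.mul_apply, Fin.sum_univ_one]
        simp [hB, hw, apply_ite (star : ℂ → ℂ)]
      have htr : (Matrix.of fun i j => (Bᴴ * B) (c, i) (d, j)).trace
          = if f c = f d then 1 else 0 := by
        rw [Matrix.trace]
        simp only [Matrix.diag_apply, Matrix.of_apply, hXe]
        rcases eq_or_ne (f c) (f d) with h | h
        · rw [if_pos h, ← h]
          simp [Finset.sum_ite_eq']
        · rw [if_neg h]
          refine Finset.sum_eq_zero fun i _ => ?_
          rcases eq_or_ne i (f c) with rfl | hi
          · rw [if_neg h, mul_zero]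
          · rw [if_neg hi, zero_mul]
      simp only [Tp, LinearMap.add_apply, LinearMap.smul_apply, depolS, depol, transposeMap_apply,
        LinearMap.coe_mk, AddHom.coe_mk, Matrix.add_apply, Matrix.smul_apply, smul_eq_mul,
        Matrix.transpose_apply, Matrix.smul_mul, Matrix.one_mul, Matrix.trace_smul,
        Matrix.one_apply, htr, Matrix.of_apply]
      rw [hXe]
      push_cast
      ring
    set ψ : Fin 2 × Fin ν → ℂ :=
      Pi.single ((0:Fin 2), f 1) 1 - Pi.single ((1:Fin 2), f 0) 1 with hψ
    have hqf := hM.dotProduct_mulVec_nonneg ψ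
    have hstar : star ψ = ψ := by
      funext q
      rcases eq_or_ne q ((0:Fin 2), f 1) with rfl | h1
      · simp [hψ, Pi.single_apply, Prod.ext_iff]
      · rcases eq_or_ne q ((1:Fin 2), f 0) with rfl | h2
        · simp [hψ, Pi.single_apply, Prod.ext_iff, (show ((1:Fin 2),f 0) ≠ ((0:Fin 2), f 1) by
            simp [Prod.ext_iff])]
        · simp [hψ, Pi.single_apply, h1, h2]
    have hne01 : f 0 ≠ f 1 := fun h => by simpa using (hfinj 0 1).mp h
    have hval : star ψ ⬝ᵥ (M.mulVec ψ)
        = M ((0:Fin 2), f 1) ((0:Fin 2), f 1) - M ((0:Fin 2), f 1) ((1:Fin 2), f 0)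
          - (M ((1:Fin 2), f 0) ((0:Fin 2), f 1) - M ((1:Fin 2), f 0) ((1:Fin 2), f 0)) := by
      rw [hstar, hψ]
      rw [Matrix.mulVec_sub, Matrix.mulVec_single, Matrix.mulVec_single]
      rw [sub_dotProduct, single_dotProduct, single_dotProduct]
      simp [Pi.sub_apply, mul_sub, mul_one]
    rw [hval] at hqf
    rw [hME, hME, hME, hME] at hqf
    simp only [if_pos rfl, if_neg hne01, if_neg (Ne.symm hne01)] at hqf
    have hqf2 : (0:ℂ) ≤ (((1 - p) / ν - p + ((1 - p) / ν - p) : ℝ) : ℂ) := by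
      convert hqf using 1
      push_cast
      ring
    have hreal : (0:ℝ) ≤ (1 - p) / ν - p + ((1 - p) / ν - p) :=
      Complex.zero_le_real.mp hqf2
    have hple : p ≤ (1 - p) / ν := by linarith
    rw [le_div_iff₀ hν0] at hple
    rw [le_div_iff₀ (by linarith : (0:ℝ) < (ν:ℝ) + 1)]
    nlinarith
  · intro hple k X hX
    have hg : 0 ≤ (1 - p) / (ν:ℝ) - p := by
      have h1 : p * ((ν:ℝ) + 1) ≤ 1 := by
        rw [← le_div_iff₀ (by linarith : (0:ℝ) < (ν:ℝ) + 1)]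
        exact hple
      have h2 : p ≤ (1 - p) / ν := by
        rw [le_div_iff₀ hν0]
        nlinarith
      linarith
    rw [amp_Tp hp0 hg]
    exact posSemidef_sum _ fun s => hX.conjTranspose_mul_mul_same _

end QI
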